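/- For 0 <= l <= n-2, the alternating sum sum_{i=0}^{l+1} (-1)^i * binomial(n-1-i, l) * binomial(l+1, i) equals 0, and for l = n-1 it equals 1; consequently sum_{l=0}^{n-1} (1/(l+1)) binomial(n+l+1, l) sum_{i=0}^{l+1} (-1)^i binomial(n-1-i, l) binomial(l+1, i) = (1/(n+1)) binomial(2n, n). -/
import Mathlib

/-- Binomial coefficient `C(a, k)` with the convention that it vanishes for
negative `a`. -/
def ibin (a : ℤ) (k : ℕ) : ℚ :=
  if 0 ≤ a then (a.toNat.choose k : ℚ) else 0

open Finset

lemma key (m : ℕ) (f : ℕ → ℚ) :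
    ∑ i ∈ range (m + 2), (-1 : ℚ) ^ i * ((m + 1).choose i) * f i
      = ∑ i ∈ range (m + 1), (-1 : ℚ) ^ i * (m.choose i) * (f i - f (i + 1)) := by
  have hA : ∑ i ∈ range (m + 1), (-1 : ℚ) ^ i * (m.choose i) * (f i - f (i + 1))
      = (∑ i ∈ range (m + 1), (-1 : ℚ) ^ i * (m.choose i) * f i)
        - ∑ i ∈ range (m + 1), (-1 : ℚ) ^ i * (m.choose i) * f (i + 1) := by
    rw [← Finset.sum_sub_distrib]; apply Finset.sum_congr rfl; intro i _; ring
  rw [hA]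
  rw [Finset.sum_range_succ' (fun i => (-1 : ℚ) ^ i * ((m + 1).choose i) * f i) (m + 1)]
  have hP : ∀ i ∈ range (m + 1),
      (-1 : ℚ) ^ (i + 1) * ((m + 1).choose (i + 1)) * f (i + 1)
        = (-1 : ℚ) ^ (i + 1) * (m.choose i) * f (i + 1)
          + (-1 : ℚ) ^ (i + 1) * (m.choose (i + 1)) * f (i + 1) := by
    intro i _
    rw [Nat.choose_succ_succ]
    push_cast
    ring
  rw [Finset.sum_congr rfl hP, Finset.sum_add_distrib]
  have h2 : ∑ i ∈ range (m + 1), (-1 : ℚ) ^ (i + 1) * (m.choose (i + 1)) * f (i + 1)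
      = (∑ i ∈ range (m + 2), (-1 : ℚ) ^ i * (m.choose i) * f i) - f 0 := by
    rw [Finset.sum_range_succ' (fun i => (-1 : ℚ) ^ i * (m.choose i) * f i) (m + 1)]
    simp
  rw [h2, Finset.sum_range_succ (fun i => (-1 : ℚ) ^ i * (m.choose i) * f i) (m + 1)]
  simp only [Nat.choose_succ_self, Nat.cast_zero, mul_zero, zero_mul, add_zero, Nat.choose_zero_right, Nat.cast_one, mul_one, pow_zero, one_mul]
  have hB : ∀ x : ℕ, (-1:ℚ)^(x+1) * (m.choose x) * f (x+1) = -((-1:ℚ)^x * (m.choose x) * f (x+1)) := by intro x; ring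
  simp only [hB, Finset.sum_neg_distrib, Nat.add_comm 1 m]
  ring

lemma aux : ∀ l N : ℕ, l + 1 ≤ N →
    ∑ i ∈ range (l + 2), (-1 : ℚ) ^ i * ((l + 1).choose i) * ((N - i).choose l) = 0 := by
  intro l
  induction l with
  | zero =>
    intro N hN
    rw [Finset.sum_range_succ, Finset.sum_range_succ]
    simp
  | succ l ih =>
    intro N hN
    rw [show l + 1 + 2 = (l + 1) + 2 from rfl,
      key (l + 1) (fun i => ((N - i).choose (l + 1) : ℚ))]
    have : ∀ i ∈ range (l + 2),
        (-1 : ℚ) ^ i * ((l + 1).choose i) *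
          (((N - i).choose (l + 1) : ℚ) - ((N - (i + 1)).choose (l + 1) : ℚ))
          = (-1 : ℚ) ^ i * ((l + 1).choose i) * (((N - 1 - i).choose l : ℚ)) := by
      intro i hi
      simp only [Finset.mem_range] at hi
      have h1 : N - i = (N - (i + 1)) + 1 := by omega
      have h2 : N - (i + 1) = N - 1 - i := by omega
      have hp : (N - (i + 1) + 1).choose (l + 1)
          = (N - (i + 1)).choose l + (N - (i + 1)).choose (l + 1) :=
        Nat.choose_succ_succ _ _
      rw [h1, hp, h2]
      push_cast
      ring
    rw [Finset.sum_congr rfl this]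
    exact ih (N - 1) (by omega)

/-- for `0 ≤ l ≤ n-2` the alternating sum
`∑_{i=0}^{l+1} (-1)^i C(n-1-i, l) C(l+1, i)` vanishes, for `l = n-1` it equals
`1`; consequently the full double sum equals the Catalan number. -/
theorem alternating_binomial_identity (n : ℕ) (hn : 1 ≤ n) :
    (∀ l : ℕ, l + 2 ≤ n →
      (∑ i ∈ Finset.range (l + 2),
        (-1) ^ i * ibin ((n : ℤ) - 1 - i) l * ((l + 1).choose i : ℚ)) = 0) ∧
    (∑ i ∈ Finset.range (n + 1),
        (-1) ^ i * ibin ((n : ℤ) - 1 - i) (n - 1) * (n.choose i : ℚ)) = 1 ∧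
    (∑ l ∈ Finset.range n, (1 / ((l : ℚ) + 1)) * ((n + l + 1).choose l : ℚ) *
        ∑ i ∈ Finset.range (l + 2),
          (-1) ^ i * ibin ((n : ℤ) - 1 - i) l * ((l + 1).choose i : ℚ)) =
      (1 / (n + 1)) * ((2 * n).choose n : ℚ) := by
  have part1 : ∀ l : ℕ, l + 2 ≤ n →
      (∑ i ∈ Finset.range (l + 2),
        (-1 : ℚ) ^ i * ibin ((n : ℤ) - 1 - i) l * ((l + 1).choose i : ℚ)) = 0 := by
    intro l hl
    have := aux l (n - 1) (by omega)
    rw [← this]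
    apply Finset.sum_congr rfl
    intro i hi
    simp only [Finset.mem_range] at hi
    have h0 : (0 : ℤ) ≤ (n : ℤ) - 1 - i := by omega
    have ht : ((n : ℤ) - 1 - i).toNat = n - 1 - i := by omega
    rw [ibin, if_pos h0, ht]
    ring
  have part2 : (∑ i ∈ Finset.range (n + 1),
      (-1 : ℚ) ^ i * ibin ((n : ℤ) - 1 - i) (n - 1) * (n.choose i : ℚ)) = 1 := by
    rw [Finset.sum_eq_single 0]
    · rw [ibin]
      have h0 : (0 : ℤ) ≤ (n : ℤ) - 1 - (0:ℕ) := by push_cast; omega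
      rw [if_pos h0]
      have : ((n : ℤ) - 1 - (0:ℕ)).toNat = n - 1 := by omega
      rw [this]
      simp
    · intro i _ hi0
      rw [ibin]
      by_cases h : (0 : ℤ) ≤ (n : ℤ) - 1 - i
      · rw [if_pos h]
        have : ((n : ℤ) - 1 - i).toNat < n - 1 := by omega
        rw [Nat.choose_eq_zero_of_lt this]
        ring
      · rw [if_neg h]; ring
    · intro h; simp at h
  refine ⟨part1, part2, ?_⟩
  obtain ⟨m, rfl⟩ : ∃ m, n = m + 1 := ⟨n - 1, by omega⟩
  rw [Finset.sum_range_succ]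
  rw [Finset.sum_eq_zero (fun l hl => by
    simp only [Finset.mem_range] at hl
    rw [part1 l (by omega)]
    ring)]
  have hinner : (∑ i ∈ Finset.range (m + 2),
      (-1 : ℚ) ^ i * ibin (((m+1) : ℤ) - 1 - i) m * ((m + 1).choose i : ℚ)) = 1 := by
    have := part2
    simpa using this
  rw [zero_add]
  push_cast
  rw [hinner, mul_one]
  have hcs : (2 * (m+1)).choose (m+1) * (m + 1) = (2 * (m+1)).choose m * (m + 2) := by
    have h := Nat.choose_succ_right_eq (2 * (m + 1)) m
    rw [show 2 * (m + 1) - m = m + 2 by omega] at h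
    exact h
  rw [show m + 1 + m + 1 = 2 * (m + 1) from by ring]
  have hq : ((2*(m+1)).choose (m+1) : ℚ) * (m+1) = ((2*(m+1)).choose m : ℚ) * (m+2) := by
    exact_mod_cast hcs
  have hm1 : ((m:ℚ) + 1) ≠ 0 := by positivity
  have hm2 : ((m:ℚ) + 1 + 1) ≠ 0 := by positivity
  field_simp
  linear_combination -hq
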